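/- In ℝ³, let K(dx) := C₁·min{1, |x|⁻¹} dx, L(dx) := C₂·e^{−c|x|}·|x|⁻² dx, and M(dx) := C₃·e^{−c|x|} dx with constants C₁, C₂, C₃ < ∞, c > 0. Then there exists C < ∞ such that for all r ∈ (0,1): Σ_{z ∈ ℤ³} K(B(zr, 3r))·M(B(zr, 2r)) ≤ C·r³ and Σ_{z ∈ ℤ³} M(B(zr, 3r))·L(B(zr, 2r)) ≤ C·r³. -/

import Mathlib

open MeasureTheory ProbabilityTheory InnerProductGeometry Real Set
open scoped ENNReal NNReal

noncomputable section

abbrev E3 : Type := EuclideanSpace ℝ (Fin 3)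
abbrev S2 : Type := Metric.sphere (0 : E3) 1

/-- Uniform (normalized) probability measure on the unit sphere `S²`. -/
noncomputable def uniformS2 : Measure S2 :=
  ((volume : Measure E3).toSphere Set.univ)⁻¹ • (volume : Measure E3).toSphere

/-- Uniform measure on `S²`, viewed as a measure on `ℝ³` (supported on the sphere). -/
noncomputable def uniformS2amb : Measure E3 := uniformS2.map Subtype.val

/-- Cross product on `ℝ³`. -/
noncomputable def cross3 (u v : E3) : E3 :=
  (WithLp.equiv 2 (Fin 3 → ℝ)).symm
    (crossProduct ((WithLp.equiv 2 (Fin 3 → ℝ)) u) ((WithLp.equiv 2 (Fin 3 → ℝ)) v))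

/-- The measure `K(dx) = C₁·min{1,|x|⁻¹} dx` on `ℝ³`. -/
noncomputable def measK (C₁ : ℝ) : Measure E3 :=
  volume.withDensity fun x => ENNReal.ofReal (C₁ * min 1 ‖x‖⁻¹)

/-- The measure `L(dx) = C₂·e^{−c|x|}|x|⁻² dx` on `ℝ³`. -/
noncomputable def measL (C₂ c : ℝ) : Measure E3 :=
  volume.withDensity fun x => ENNReal.ofReal (C₂ * Real.exp (-c * ‖x‖) * (‖x‖ ^ 2)⁻¹)

/-- The measure `M(dx) = C₃·e^{−c|x|} dx` on `ℝ³`. -/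
noncomputable def measM (C₃ c : ℝ) : Measure E3 :=
  volume.withDensity fun x => ENNReal.ofReal (C₃ * Real.exp (-c * ‖x‖))

/-- The scaled lattice point `z·r ∈ ℝ³` for `z ∈ ℤ³`. -/
noncomputable def latPt (r : ℝ) (z : Fin 3 → ℤ) : E3 :=
  (WithLp.equiv 2 (Fin 3 → ℝ)).symm fun i => (z i : ℝ) * r

lemma aux_coord (x : E3) (i : Fin 3) : |x i| ≤ ‖x‖ := by
  rw [EuclideanSpace.norm_eq]
  have h1 : |x i| = Real.sqrt (‖x i‖ ^ 2) := by
    rw [Real.sqrt_sq_eq_abs]; simp [Real.norm_eq_abs]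
  rw [h1]
  exact Real.sqrt_le_sqrt <| Finset.single_le_sum (f := fun j => ‖x j‖ ^ 2)
    (fun j _ => by positivity) (Finset.mem_univ i)

lemma overlap (μ : Measure E3) (r : ℝ) (hr : 0 < r) :
    ∑' z : Fin 3 → ℤ, μ (Metric.closedBall (latPt r z) (2*r)) ≤ 125 * μ Set.univ := by
  have hm : ∀ z : Fin 3 → ℤ, MeasurableSet (Metric.closedBall (latPt r z) (2*r)) :=
    fun z => measurableSet_closedBall
  have key : ∀ x : E3,
      (∑' z : Fin 3 → ℤ, (Metric.closedBall (latPt r z) (2*r)).indicator (1 : E3 → ℝ≥0∞) x)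
        ≤ 125 := by
    intro x
    set T : Finset (Fin 3 → ℤ) :=
      Fintype.piFinset fun i => Finset.Icc (⌊x i / r⌋ - 2) (⌊x i / r⌋ + 2) with hT
    have hsub : ∀ z : Fin 3 → ℤ,
        (Metric.closedBall (latPt r z) (2*r)).indicator (1 : E3 → ℝ≥0∞) x
          ≤ Set.indicator (↑T) (fun _ => (1:ℝ≥0∞)) z := by
      intro z
      by_cases hx : x ∈ Metric.closedBall (latPt r z) (2*r)
      · have hzT : z ∈ T := by
          rw [hT, Fintype.mem_piFinset]
          intro i
          have hxi : |x i - (z i : ℝ) * r| ≤ 2 * r := by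
            have := aux_coord (x - latPt r z) i
            have hco : (x - latPt r z) i = x i - (z i : ℝ) * r := by
              simp [latPt]
            rw [hco] at this
            calc |x i - (z i : ℝ) * r| ≤ ‖x - latPt r z‖ := this
              _ = dist x (latPt r z) := by rw [dist_eq_norm]
              _ ≤ 2 * r := Metric.mem_closedBall.mp hx
          rw [abs_le] at hxi
          obtain ⟨hlo, hhi⟩ := hxi
          rw [Finset.mem_Icc]
          have hup : (z i : ℝ) - 2 ≤ x i / r := by
            rw [le_div_iff₀ hr]; nlinarith
          have hdn : x i / r ≤ (z i : ℝ) + 2 := by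
            rw [div_le_iff₀ hr]; nlinarith
          have h1 : z i - 2 ≤ ⌊x i / r⌋ := Int.le_floor.mpr (by push_cast; exact hup)
          have h2 : (⌊x i / r⌋ : ℤ) ≤ z i + 2 := by
            have := le_trans (Int.floor_le (x i / r)) hdn
            have h' : ((⌊x i / r⌋ : ℤ) : ℝ) ≤ ((z i + 2 : ℤ) : ℝ) := by push_cast; exact this
            exact Int.cast_le.mp h'
          omega
        simp only [Set.indicator_of_mem hx, Set.indicator_of_mem (by exact_mod_cast hzT : z ∈ (↑T : Set (Fin 3 → ℤ)))]
        exact le_rfl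
      · simp [Set.indicator_of_notMem hx]
    calc (∑' z : Fin 3 → ℤ, (Metric.closedBall (latPt r z) (2*r)).indicator (1 : E3 → ℝ≥0∞) x)
        ≤ ∑' z : Fin 3 → ℤ, Set.indicator (↑T) (fun _ => (1:ℝ≥0∞)) z := ENNReal.tsum_le_tsum hsub
      _ = ∑ z ∈ T, Set.indicator (↑T) (fun _ => (1:ℝ≥0∞)) z :=
          tsum_eq_sum (fun z hz => Set.indicator_of_notMem (by exact_mod_cast hz) _)
      _ = ∑ z ∈ T, 1 := Finset.sum_congr rfl fun z hz =>
          Set.indicator_of_mem (by exact_mod_cast hz) _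
      _ = T.card := by simp
      _ ≤ 125 := by
          rw [hT]
          have : (Fintype.piFinset fun i : Fin 3 => Finset.Icc (⌊x i / r⌋ - 2) (⌊x i / r⌋ + 2)).card
              = ∏ i : Fin 3, (Finset.Icc (⌊x i / r⌋ - 2) (⌊x i / r⌋ + 2)).card :=
            Fintype.card_piFinset _
          rw [this]
          have hc : ∀ i : Fin 3, (Finset.Icc (⌊x i / r⌋ - 2) (⌊x i / r⌋ + 2)).card = 5 := by
            intro i; rw [Int.card_Icc]; omega
          simp [hc]
  calc ∑' z : Fin 3 → ℤ, μ (Metric.closedBall (latPt r z) (2*r))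
      = ∑' z : Fin 3 → ℤ, ∫⁻ x, (Metric.closedBall (latPt r z) (2*r)).indicator 1 x ∂μ := by
        refine tsum_congr fun z => ?_
        rw [lintegral_indicator_one (hm z)]
    _ = ∫⁻ x, ∑' z : Fin 3 → ℤ, (Metric.closedBall (latPt r z) (2*r)).indicator 1 x ∂μ :=
        (lintegral_tsum fun z => (Measurable.indicator measurable_const (hm z)).aemeasurable).symm
    _ ≤ ∫⁻ _, 125 ∂μ := lintegral_mono key
    _ = 125 * μ Set.univ := by simp [lintegral_const]


lemma exp_decay_bound {C c : ℝ} (hC : 0 ≤ C) (hc : 0 < c) (t : ℝ) (ht : 0 ≤ t) :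
    C * Real.exp (-c * t) ≤ (C * (24 * Real.exp c / c ^ 4)) * (1 + t) ^ (-(4:ℝ)) := by
  have h1t : (0:ℝ) < 1 + t := by linarith
  have hs : (0:ℝ) ≤ c * (1 + t) := by positivity
  have hfac := Real.pow_div_factorial_le_exp (x := c * (1 + t)) hs 4
  have hfac' : (c * (1 + t)) ^ 4 / 24 ≤ Real.exp (c * (1 + t)) := by
    norm_num [Nat.factorial] at hfac; linarith
  have h2 : Real.exp (-c * t) * ((c * (1 + t)) ^ 4 / 24) ≤ Real.exp c := by
    calc Real.exp (-c * t) * ((c * (1 + t)) ^ 4 / 24)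
        ≤ Real.exp (-c * t) * Real.exp (c * (1 + t)) := by
          exact mul_le_mul_of_nonneg_left hfac' (Real.exp_pos _).le
      _ = Real.exp c := by rw [← Real.exp_add]; ring_nf
  have h3 : Real.exp (-c * t) ≤ 24 * Real.exp c / (c ^ 4 * (1 + t) ^ 4) := by
    rw [le_div_iff₀ (by positivity)]
    have : (c * (1 + t)) ^ 4 = c ^ 4 * (1 + t) ^ 4 := by ring
    nlinarith [h2]
  rw [Real.rpow_neg h1t.le, show ((4:ℝ)) = ((4:ℕ):ℝ) by norm_num, Real.rpow_natCast]
  calc C * Real.exp (-c * t) ≤ C * (24 * Real.exp c / (c ^ 4 * (1 + t) ^ 4)) := by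
        exact mul_le_mul_of_nonneg_left h3 hC
    _ = C * (24 * Real.exp c / c ^ 4) * ((1 + t) ^ 4)⁻¹ := by
        field_simp

lemma lint_exp_lt_top {C c : ℝ} (hC : 0 ≤ C) (hc : 0 < c) :
    (∫⁻ x : E3, ENNReal.ofReal (C * Real.exp (-c * ‖x‖))) < ∞ := by
  have h4 : ((Module.finrank ℝ E3 : ℝ)) < 4 := by simp; norm_num
  have hJ := finite_integral_one_add_norm (μ := (volume : Measure E3)) h4
  set A : ℝ := C * (24 * Real.exp c / c ^ 4) with hA
  have hA0 : 0 ≤ A := by positivity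
  calc (∫⁻ x : E3, ENNReal.ofReal (C * Real.exp (-c * ‖x‖)))
      ≤ ∫⁻ x : E3, ENNReal.ofReal A * ENNReal.ofReal ((1 + ‖x‖) ^ (-(4:ℝ))) := by
        refine lintegral_mono fun x => ?_
        rw [← ENNReal.ofReal_mul hA0]
        exact ENNReal.ofReal_le_ofReal (exp_decay_bound hC hc ‖x‖ (norm_nonneg x))
    _ = ENNReal.ofReal A * ∫⁻ x : E3, ENNReal.ofReal ((1 + ‖x‖) ^ (-(4:ℝ))) :=
        lintegral_const_mul' _ _ ENNReal.ofReal_ne_top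
    _ < ∞ := ENNReal.mul_lt_top ENNReal.ofReal_lt_top hJ

lemma lint_L_lt_top {C c : ℝ} (hC : 0 ≤ C) (hc : 0 < c) :
    (volume.withDensity fun x : E3 =>
        ENNReal.ofReal (C * Real.exp (-c * ‖x‖) * (‖x‖ ^ 2)⁻¹)) Set.univ < ∞ := by
  set f : E3 → ℝ≥0∞ := fun x => ENNReal.ofReal (C * Real.exp (-c * ‖x‖) * (‖x‖ ^ 2)⁻¹) with hf
  set ν : Measure E3 := volume.withDensity f with hν
  set vB : ℝ≥0∞ := volume (Metric.ball (0:E3) 1) with hvB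
  have hvB_top : vB < ∞ := measure_ball_lt_top
  have hsplit : ν Set.univ ≤ ν (Metric.closedBall (0:E3) 1) + ν (Metric.closedBall (0:E3) 1)ᶜ := by
    rw [← measure_add_measure_compl (μ := ν) (measurableSet_closedBall)]
  have hcompl : ν (Metric.closedBall (0:E3) 1)ᶜ < ∞ := by
    have : ν (Metric.closedBall (0:E3) 1)ᶜ
        ≤ ∫⁻ x : E3, ENNReal.ofReal (C * Real.exp (-c * ‖x‖)) := by
      rw [hν, withDensity_apply _ measurableSet_closedBall.compl]
      calc ∫⁻ x in (Metric.closedBall (0:E3) 1)ᶜ, f x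
          ≤ ∫⁻ x in (Metric.closedBall (0:E3) 1)ᶜ, ENNReal.ofReal (C * Real.exp (-c * ‖x‖)) := by
            refine setLIntegral_mono (by fun_prop) fun x hx => ?_
            have hx1 : 1 < ‖x‖ := by
              simpa [Metric.mem_closedBall, dist_zero_right] using hx
            refine ENNReal.ofReal_le_ofReal ?_
            have hinv : (‖x‖ ^ 2)⁻¹ ≤ 1 := by
              rw [inv_le_one_iff₀]; right; nlinarith
            calc C * Real.exp (-c * ‖x‖) * (‖x‖ ^ 2)⁻¹
                ≤ C * Real.exp (-c * ‖x‖) * 1 := by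
                  exact mul_le_mul_of_nonneg_left hinv (by positivity)
              _ = C * Real.exp (-c * ‖x‖) := by ring
        _ ≤ ∫⁻ x : E3, ENNReal.ofReal (C * Real.exp (-c * ‖x‖)) :=
            setLIntegral_le_lintegral _ _
    exact lt_of_le_of_lt this (lint_exp_lt_top hC hc)
  have hball : ν (Metric.closedBall (0:E3) 1) < ∞ := by
    set S : ℕ → Set E3 := fun n =>
      Metric.closedBall (0:E3) ((2:ℝ)⁻¹ ^ n) \ Metric.closedBall (0:E3) ((2:ℝ)⁻¹ ^ (n+1)) with hS
    have hmS : ∀ n, MeasurableSet (S n) :=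
      fun n => measurableSet_closedBall.diff measurableSet_closedBall
    have hcover : Metric.closedBall (0:E3) 1 ⊆ {0} ∪ ⋃ n : ℕ, S n := by
      intro x hx
      rcases eq_or_ne x 0 with h0 | h0
      · exact Or.inl (by simp [h0])
      · right
        have hxpos : 0 < ‖x‖ := norm_pos_iff.mpr h0
        have hx1 : ‖x‖ ≤ 1 := by simpa [dist_zero_right] using hx
        have hex : ∃ n : ℕ, (2:ℝ)⁻¹ ^ (n+1) < ‖x‖ := by
          obtain ⟨n, hn⟩ := exists_pow_lt_of_lt_one hxpos (by norm_num : (2:ℝ)⁻¹ < 1)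
          exact ⟨n, lt_of_le_of_lt (by
            apply pow_le_pow_of_le_one (by norm_num) (by norm_num) (by omega)) hn⟩
        set n := Nat.find hex with hn
        have hlt : (2:ℝ)⁻¹ ^ (n+1) < ‖x‖ := Nat.find_spec hex
        have hle : ‖x‖ ≤ (2:ℝ)⁻¹ ^ n := by
          rcases Nat.eq_zero_or_pos n with h | h
          · rw [h]; simpa using hx1
          · have := Nat.find_min hex (m := n - 1) (by omega)
            push_neg at this
            have : ‖x‖ ≤ (2:ℝ)⁻¹ ^ (n - 1 + 1) := this
            calc ‖x‖ ≤ (2:ℝ)⁻¹ ^ (n - 1 + 1) := this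
              _ = (2:ℝ)⁻¹ ^ n := by congr 1; omega
        refine Set.mem_iUnion.mpr ⟨n, ?_⟩
        constructor
        · simpa [dist_zero_right] using hle
        · simp only [Metric.mem_closedBall, dist_zero_right, not_le]
          exact hlt
    have hSn : ∀ n : ℕ, ν (S n) ≤ ENNReal.ofReal (C * 4 ^ (n+1)) *
        (ENNReal.ofReal (((2:ℝ)⁻¹ ^ n) ^ 3) * vB) := by
      intro n
      have hbnd : ∀ x ∈ S n, f x ≤ ENNReal.ofReal (C * 4 ^ (n+1)) := by
        intro x hx
        have hxgt : (2:ℝ)⁻¹ ^ (n+1) < ‖x‖ := by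
          have := hx.2
          simpa [Metric.mem_closedBall, dist_zero_right, not_le] using this
        have hb : (0:ℝ) < (2:ℝ)⁻¹ ^ (n+1) := by positivity
        have hinv : (‖x‖ ^ 2)⁻¹ ≤ 4 ^ (n+1) := by
          have hsq : ((2:ℝ)⁻¹ ^ (n+1)) ^ 2 ≤ ‖x‖ ^ 2 := by nlinarith
          have h1 : (‖x‖ ^ 2)⁻¹ ≤ (((2:ℝ)⁻¹ ^ (n+1)) ^ 2)⁻¹ := by
            apply inv_anti₀ (by positivity) hsq
          have h2 : (((2:ℝ)⁻¹ ^ (n+1)) ^ 2)⁻¹ = 4 ^ (n+1) := by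
            rw [inv_pow, inv_pow, inv_inv, ← pow_mul, mul_comm, pow_mul]
            norm_num
          linarith
        have hexp : Real.exp (-c * ‖x‖) ≤ 1 := by
          rw [Real.exp_le_one_iff]
          nlinarith [norm_nonneg x]
        refine ENNReal.ofReal_le_ofReal ?_
        calc C * Real.exp (-c * ‖x‖) * (‖x‖ ^ 2)⁻¹
            ≤ C * 1 * 4 ^ (n+1) := by
              gcongr <;> positivity
          _ = C * 4 ^ (n+1) := by ring
      calc ν (S n) = ∫⁻ x in S n, f x := by rw [hν, withDensity_apply _ (hmS n)]
        _ ≤ ∫⁻ _ in S n, ENNReal.ofReal (C * 4 ^ (n+1)) :=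
            setLIntegral_mono measurable_const hbnd
        _ = ENNReal.ofReal (C * 4 ^ (n+1)) * volume (S n) := by
            rw [setLIntegral_const]
        _ ≤ ENNReal.ofReal (C * 4 ^ (n+1)) *
            (ENNReal.ofReal (((2:ℝ)⁻¹ ^ n) ^ 3) * vB) := by
            gcongr
            calc volume (S n) ≤ volume (Metric.closedBall (0:E3) ((2:ℝ)⁻¹ ^ n)) :=
                measure_mono diff_subset
              _ = ENNReal.ofReal (((2:ℝ)⁻¹ ^ n) ^ 3) * vB := by
                rw [Measure.addHaar_closedBall _ _ (by positivity)]
                simp [hvB]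
    have harith : ∀ n : ℕ, ENNReal.ofReal (C * 4 ^ (n+1)) * ENNReal.ofReal (((2:ℝ)⁻¹ ^ n) ^ 3)
        = ENNReal.ofReal (4 * C) * (ENNReal.ofReal 2⁻¹) ^ n := by
      intro n
      rw [← ENNReal.ofReal_pow (by norm_num), ← ENNReal.ofReal_mul (by positivity),
        ← ENNReal.ofReal_mul (by positivity)]
      congr 1
      have h1 : (((2:ℝ)⁻¹ ^ n) ^ 3) = ((8:ℝ)⁻¹) ^ n := by
        rw [← pow_mul, mul_comm, pow_mul]
        norm_num
      rw [h1]
      have h2 : (4:ℝ) ^ (n+1) * (8⁻¹:ℝ) ^ n = 4 * (2⁻¹:ℝ) ^ n := by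
        rw [pow_succ]
        rw [show (4:ℝ)^n * 4 * (8⁻¹:ℝ)^n = 4 * (((4:ℝ) * 8⁻¹) ^ n) by rw [mul_pow]; ring]
        norm_num
      calc C * 4 ^ (n+1) * ((8:ℝ)⁻¹) ^ n = C * (4 ^ (n+1) * (8⁻¹:ℝ) ^ n) := by ring
        _ = C * (4 * (2⁻¹:ℝ) ^ n) := by rw [h2]
        _ = 4 * C * (2⁻¹:ℝ) ^ n := by ring
    have hsum : ∑' n : ℕ, ν (S n) ≤
        ENNReal.ofReal (4 * C) * vB * (1 - ENNReal.ofReal 2⁻¹)⁻¹ := by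
      calc ∑' n : ℕ, ν (S n)
          ≤ ∑' n : ℕ, ENNReal.ofReal (4 * C) * (ENNReal.ofReal 2⁻¹) ^ n * vB := by
            refine ENNReal.tsum_le_tsum fun n => ?_
            calc ν (S n) ≤ ENNReal.ofReal (C * 4 ^ (n+1)) *
                (ENNReal.ofReal (((2:ℝ)⁻¹ ^ n) ^ 3) * vB) := hSn n
              _ = ENNReal.ofReal (C * 4 ^ (n+1)) * ENNReal.ofReal (((2:ℝ)⁻¹ ^ n) ^ 3) * vB := by
                  ring
              _ = ENNReal.ofReal (4 * C) * (ENNReal.ofReal 2⁻¹) ^ n * vB := by rw [harith n]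
        _ = ENNReal.ofReal (4 * C) * vB * ∑' n : ℕ, (ENNReal.ofReal 2⁻¹) ^ n := by
            rw [← ENNReal.tsum_mul_left]
            refine tsum_congr fun n => by ring
        _ = ENNReal.ofReal (4 * C) * vB * (1 - ENNReal.ofReal 2⁻¹)⁻¹ := by
            rw [ENNReal.tsum_geometric]
    have hgeo_top : (1 - ENNReal.ofReal 2⁻¹)⁻¹ < ∞ := by
      rw [ENNReal.inv_lt_top]
      rw [tsub_pos_iff_lt]
      exact ENNReal.ofReal_lt_one.mpr (by norm_num)
    calc ν (Metric.closedBall (0:E3) 1) ≤ ν ({0} ∪ ⋃ n : ℕ, S n) := measure_mono hcover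
      _ ≤ ν {0} + ν (⋃ n : ℕ, S n) := measure_union_le _ _
      _ ≤ ν {0} + ∑' n : ℕ, ν (S n) := by gcongr; exact measure_iUnion_le _
      _ = ∑' n : ℕ, ν (S n) := by
          rw [hν, (withDensity_absolutelyContinuous volume f) (measure_singleton 0), zero_add]
      _ ≤ ENNReal.ofReal (4 * C) * vB * (1 - ENNReal.ofReal 2⁻¹)⁻¹ := hsum
      _ < ∞ := by
          apply ENNReal.mul_lt_top
          · exact ENNReal.mul_lt_top ENNReal.ofReal_lt_top hvB_top
          · exact hgeo_top
  calc ν Set.univ ≤ ν (Metric.closedBall (0:E3) 1) + ν (Metric.closedBall (0:E3) 1)ᶜ := hsplit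
    _ < ∞ := ENNReal.add_lt_top.mpr ⟨hball, hcompl⟩


lemma measK_ball_le (C₁ : ℝ) (hC₁ : 0 ≤ C₁) (x : E3) {ρ : ℝ} (hρ : 0 ≤ ρ) :
    measK C₁ (Metric.closedBall x ρ) ≤
      ENNReal.ofReal C₁ * (ENNReal.ofReal (ρ ^ 3) * volume (Metric.ball (0:E3) 1)) := by
  rw [measK, withDensity_apply _ measurableSet_closedBall]
  calc ∫⁻ y in Metric.closedBall x ρ, ENNReal.ofReal (C₁ * min 1 ‖y‖⁻¹)
      ≤ ∫⁻ _ in Metric.closedBall x ρ, ENNReal.ofReal C₁ :=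
        setLIntegral_mono measurable_const fun y _ => ENNReal.ofReal_le_ofReal
          (mul_le_of_le_one_right hC₁ (min_le_left _ _))
    _ = ENNReal.ofReal C₁ * volume (Metric.closedBall x ρ) := by rw [setLIntegral_const]
    _ = ENNReal.ofReal C₁ * (ENNReal.ofReal (ρ ^ 3) * volume (Metric.ball (0:E3) 1)) := by
        rw [Measure.addHaar_closedBall _ _ hρ, show Module.finrank ℝ E3 = 3 from by simp]

lemma measM_ball_le (C₃ c : ℝ) (hC₃ : 0 ≤ C₃) (hc : 0 < c) (x : E3) {ρ : ℝ} (hρ : 0 ≤ ρ) :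
    measM C₃ c (Metric.closedBall x ρ) ≤
      ENNReal.ofReal C₃ * (ENNReal.ofReal (ρ ^ 3) * volume (Metric.ball (0:E3) 1)) := by
  rw [measM, withDensity_apply _ measurableSet_closedBall]
  calc ∫⁻ y in Metric.closedBall x ρ, ENNReal.ofReal (C₃ * Real.exp (-c * ‖y‖))
      ≤ ∫⁻ _ in Metric.closedBall x ρ, ENNReal.ofReal C₃ := by
        refine setLIntegral_mono measurable_const fun y _ => ENNReal.ofReal_le_ofReal ?_
        have : Real.exp (-c * ‖y‖) ≤ 1 := by
          rw [Real.exp_le_one_iff]; nlinarith [norm_nonneg y]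
        exact mul_le_of_le_one_right hC₃ this
    _ = ENNReal.ofReal C₃ * volume (Metric.closedBall x ρ) := by rw [setLIntegral_const]
    _ = ENNReal.ofReal C₃ * (ENNReal.ofReal (ρ ^ 3) * volume (Metric.ball (0:E3) 1)) := by
        rw [Measure.addHaar_closedBall _ _ hρ, show Module.finrank ℝ E3 = 3 from by simp]


/-- `Σ_z K(B(zr,3r))·M(B(zr,2r)) ≤ C·r³` and `Σ_z M(B(zr,3r))·L(B(zr,2r)) ≤ C·r³`. -/
theorem stmt_9 (C₁ C₂ C₃ c : ℝ) (hC₁ : 0 ≤ C₁) (hC₂ : 0 ≤ C₂) (hC₃ : 0 ≤ C₃) (hc : 0 < c) :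
    ∃ C : ℝ, ∀ r ∈ Set.Ioo (0:ℝ) 1,
      (∑' z : Fin 3 → ℤ,
          measK C₁ (Metric.closedBall (latPt r z) (3*r)) *
            measM C₃ c (Metric.closedBall (latPt r z) (2*r)))
        ≤ ENNReal.ofReal (C * r ^ 3) ∧
      (∑' z : Fin 3 → ℤ,
          measM C₃ c (Metric.closedBall (latPt r z) (3*r)) *
            measL C₂ c (Metric.closedBall (latPt r z) (2*r)))
        ≤ ENNReal.ofReal (C * r ^ 3) := by
  set vB : ℝ≥0∞ := volume (Metric.ball (0:E3) 1) with hvB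
  have hvB_top : vB ≠ ∞ := measure_ball_lt_top.ne
  have hMfin : measM C₃ c Set.univ ≠ ∞ := by
    rw [measM, withDensity_apply _ MeasurableSet.univ, Measure.restrict_univ]
    exact (lint_exp_lt_top hC₃ hc).ne
  have hLfin : measL C₂ c Set.univ ≠ ∞ := (lint_L_lt_top hC₂ hc).ne
  set D : ℝ≥0∞ := (ENNReal.ofReal C₁ + ENNReal.ofReal C₃) * ENNReal.ofReal 27 * vB * 125 *
      (measM C₃ c Set.univ + measL C₂ c Set.univ) with hD
  have hD_top : D ≠ ∞ := by
    rw [hD]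
    finiteness
  refine ⟨D.toReal, fun r hr => ?_⟩
  obtain ⟨hr0, _⟩ := hr
  have h3r : (0:ℝ) ≤ 3 * r := by linarith
  have h27 : ENNReal.ofReal ((3*r) ^ 3) = ENNReal.ofReal 27 * ENNReal.ofReal (r ^ 3) := by
    rw [← ENNReal.ofReal_mul (by norm_num)]
    ring_nf
  have hDr : D * ENNReal.ofReal (r ^ 3) = ENNReal.ofReal (D.toReal * r ^ 3) := by
    rw [ENNReal.ofReal_mul ENNReal.toReal_nonneg, ENNReal.ofReal_toReal hD_top]
  constructor
  · calc (∑' z : Fin 3 → ℤ,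
          measK C₁ (Metric.closedBall (latPt r z) (3*r)) *
            measM C₃ c (Metric.closedBall (latPt r z) (2*r)))
        ≤ ∑' z : Fin 3 → ℤ,
          (ENNReal.ofReal C₁ * (ENNReal.ofReal ((3*r) ^ 3) * vB)) *
            measM C₃ c (Metric.closedBall (latPt r z) (2*r)) :=
          ENNReal.tsum_le_tsum fun z =>
            mul_le_mul_left (measK_ball_le C₁ hC₁ _ h3r) _
      _ = (ENNReal.ofReal C₁ * (ENNReal.ofReal ((3*r) ^ 3) * vB)) *
            ∑' z : Fin 3 → ℤ, measM C₃ c (Metric.closedBall (latPt r z) (2*r)) :=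
          ENNReal.tsum_mul_left
      _ ≤ (ENNReal.ofReal C₁ * (ENNReal.ofReal ((3*r) ^ 3) * vB)) *
            (125 * measM C₃ c Set.univ) :=
          mul_le_mul_right (overlap _ r hr0) _
      _ = (ENNReal.ofReal C₁ * ENNReal.ofReal 27 * vB * 125 * measM C₃ c Set.univ) *
            ENNReal.ofReal (r ^ 3) := by rw [h27]; ring
      _ ≤ D * ENNReal.ofReal (r ^ 3) := by
          rw [hD]
          gcongr
          · exact le_self_add
          · exact le_self_add
      _ = ENNReal.ofReal (D.toReal * r ^ 3) := hDr
  · calc (∑' z : Fin 3 → ℤ,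
          measM C₃ c (Metric.closedBall (latPt r z) (3*r)) *
            measL C₂ c (Metric.closedBall (latPt r z) (2*r)))
        ≤ ∑' z : Fin 3 → ℤ,
          (ENNReal.ofReal C₃ * (ENNReal.ofReal ((3*r) ^ 3) * vB)) *
            measL C₂ c (Metric.closedBall (latPt r z) (2*r)) :=
          ENNReal.tsum_le_tsum fun z =>
            mul_le_mul_left (measM_ball_le C₃ c hC₃ hc _ h3r) _
      _ = (ENNReal.ofReal C₃ * (ENNReal.ofReal ((3*r) ^ 3) * vB)) *
            ∑' z : Fin 3 → ℤ, measL C₂ c (Metric.closedBall (latPt r z) (2*r)) :=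
          ENNReal.tsum_mul_left
      _ ≤ (ENNReal.ofReal C₃ * (ENNReal.ofReal ((3*r) ^ 3) * vB)) *
            (125 * measL C₂ c Set.univ) :=
          mul_le_mul_right (overlap _ r hr0) _
      _ = (ENNReal.ofReal C₃ * ENNReal.ofReal 27 * vB * 125 * measL C₂ c Set.univ) *
            ENNReal.ofReal (r ^ 3) := by rw [h27]; ring
      _ ≤ D * ENNReal.ofReal (r ^ 3) := by
          rw [hD]
          gcongr
          · exact le_add_self
          · exact le_add_self
      _ = ENNReal.ofReal (D.toReal * r ^ 3) := hDr
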